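/- First-order optimality condition for the expected-misclassification-cost minimum (tangency condition): if G is differentiable at a point a with 0 < a < 1 and the expected misclassification cost E has a local minimum at a, then the derivative of G at a equals the critical cost ratio, G′(a) = (P₀·(C_FP − C_TN))/(P₁·(C_FN − C_TP)). -/

import Mathlib

/-- First-order optimality (tangency) condition for the
expected-misclassification-cost minimum: if the ROC curve `G` is
differentiable at an interior point `a ∈ (0,1)` at which the expected
misclassification cost `E` has a local minimum, then
`G′(a) = (P₀·(C_FP − C_TN)) / (P₁·(C_FN − C_TP))`. -/
theorem tangency_condition
    (P₀ P₁ CFP CTN CFN CTP : ℝ)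
    (hP₀ : 0 < P₀) (hP₁ : 0 < P₁)
    (hΔ₀ : 0 < CFP - CTN) (hΔ₁ : 0 < CFN - CTP)
    (G : ℝ → ℝ) (E : ℝ → ℝ)
    (hE : ∀ α, E α = P₀ * (α * CFP + (1 - α) * CTN)
        + P₁ * (G α * CTP + (1 - G α) * CFN))
    (a : ℝ) (ha₀ : 0 < a) (ha₁ : a < 1)
    (hG : DifferentiableAt ℝ G a)
    (hmin : IsLocalMin E a) :
    deriv G a = (P₀ * (CFP - CTN)) / (P₁ * (CFN - CTP)) := by
  have hEfun : E = fun α => P₀ * (α * CFP + (1 - α) * CTN)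
      + P₁ * (G α * CTP + (1 - G α) * CFN) := funext hE
  have hGd := hG.hasDerivAt
  have hEd : HasDerivAt E
      (P₀ * (CFP - CTN) + P₁ * (deriv G a * CTP - deriv G a * CFN)) a := by
    rw [hEfun]
    have h1 : HasDerivAt (fun α : ℝ => α * CFP + (1 - α) * CTN) (CFP - CTN) a := by
      have := ((hasDerivAt_id a).mul_const CFP).add
        (((hasDerivAt_const a (1:ℝ)).sub (hasDerivAt_id a)).mul_const CTN)
      simpa [Pi.add_def, ← sub_eq_add_neg] using this
    have h2 : HasDerivAt (fun α : ℝ => G α * CTP + (1 - G α) * CFN)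
        (deriv G a * CTP - deriv G a * CFN) a := by
      have := (hGd.mul_const CTP).add (((hasDerivAt_const a (1:ℝ)).sub hGd).mul_const CFN)
      simpa [Pi.add_def, sub_mul, ← sub_eq_add_neg] using this
    simpa [Pi.add_def, mul_sub] using (h1.const_mul P₀).add (h2.const_mul P₁)
  have hzero := hmin.hasDerivAt_eq_zero hEd
  have hne : P₁ * (CFN - CTP) ≠ 0 := by positivity
  field_simp
  nlinarith [hzero]
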